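/- Let D be a triangulated category with a t-structure t. The pair F_t = (E_t, M_t), where E_t = {φ : τ^{≥1}φ iso} and M_t = {φ : τ^{≤0}φ iso}, is a triangulated factorization system: E_t^⊥ = M_t, ^⊥M_t = E_t, E_t is closed under Σ, and every morphism factors as a morphism in E_t followed by a morphism in M_t. -/

import Mathlib

open CategoryTheory Category Limits Pretriangulated ZeroObject

universe v u w

section Defs

variable {D : Type u} [Category.{v} D] [HasZeroObject D] [Preadditive D]
  [HasShift D ℤ] [∀ n : ℤ, (shiftFunctor D n).Additive] [Pretriangulated D]

/-- Homotopy orthogonality (Def. 1.1): conditions (HO1) and (HO2), stated for every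
completion of `e` and `m` to distinguished triangles. -/
def HOrth {E₀ E₁ M₀ M₁ : D} (e : E₀ ⟶ E₁) (m : M₀ ⟶ M₁) : Prop :=
  ∀ (Ce : D) (αe : E₁ ⟶ Ce) (βe : Ce ⟶ E₀⟦(1:ℤ)⟧),
    Triangle.mk e αe βe ∈ (distTriang D) →
    ∀ (Cm : D) (αm : M₁ ⟶ Cm) (βm : Cm ⟶ M₀⟦(1:ℤ)⟧),
      Triangle.mk m αm βm ∈ (distTriang D) →
      (∀ φ : Ce ⟶ Cm⟦(-1:ℤ)⟧,
        αe ≫ φ ≫ βm⟦(-1:ℤ)⟧' ≫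
          (shiftFunctorCompIsoId D (1:ℤ) (-1:ℤ) (by omega)).hom.app M₀ = 0) ∧
      Function.Injective (fun φ : Ce ⟶ Cm => αe ≫ φ ≫ βm)

/-- The right homotopy-orthogonal class `E^⊥`. -/
def rightOrth (E : MorphismProperty D) : MorphismProperty D :=
  fun _ _ m => ∀ ⦃A B : D⦄ (e : A ⟶ B), E e → HOrth e m

/-- The left homotopy-orthogonal class `^⊥M`. -/
def leftOrth (M : MorphismProperty D) : MorphismProperty D :=
  fun _ _ e => ∀ ⦃A B : D⦄ (m : A ⟶ B), M m → HOrth e m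

/-- The 3-for-2 property for a class of morphisms. -/
def ThreeForTwo (P : MorphismProperty D) : Prop :=
  ∀ ⦃X Y Z : D⦄ (f : X ⟶ Y) (g : Y ⟶ Z),
    (P f → P g → P (f ≫ g)) ∧ (P f → P (f ≫ g) → P g) ∧ (P g → P (f ≫ g) → P f)

/-- A triangulated pre-factorization system (Def. 1.12(1)). -/
structure IsTriPFS (E M : MorphismProperty D) : Prop where
  right_eq : rightOrth E = M
  left_eq : leftOrth M = E
  shiftE : ∀ ⦃X Y : D⦄ (f : X ⟶ Y), E f → E (f⟦(1:ℤ)⟧')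

/-- A triangulated factorization system (Def. 1.12(2)). -/
structure IsTriFS (E M : MorphismProperty D) extends IsTriPFS E M : Prop where
  fact : ∀ ⦃X Y : D⦄ (f : X ⟶ Y),
    ∃ (P : D) (e : X ⟶ P) (m : P ⟶ Y), E e ∧ M m ∧ e ≫ m = f

/-- A normal triangulated torsion theory (Defs. 1.15, 1.16). -/
structure IsNormalTTT (E M : MorphismProperty D) extends IsTriFS E M : Prop where
  three_E : ThreeForTwo E
  three_M : ThreeForTwo M
  normal : ∀ ⦃X T : D⦄ (e : X ⟶ T) (m : T ⟶ (0:D)), E e → M m →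
    ∀ ⦃R : D⦄ (r : R ⟶ X) (δ : T ⟶ R⟦(1:ℤ)⟧),
      Triangle.mk r e δ ∈ (distTriang D) → E (0 : R ⟶ (0:D))

/-- A middling good morphism of triangles (Neeman): one extending to a 3×3 diagram
whose rows and columns are distinguished triangles, all squares commuting except
the lower-right one, which anticommutes. -/
def MiddlingGood {A₀ B₀ C₀ A₁ B₁ C₁ : D}
    (φ₀ : A₀ ⟶ B₀) (ψ₀ : B₀ ⟶ C₀) (δ₀ : C₀ ⟶ A₀⟦(1:ℤ)⟧)
    (φ₁ : A₁ ⟶ B₁) (ψ₁ : B₁ ⟶ C₁) (δ₁ : C₁ ⟶ A₁⟦(1:ℤ)⟧)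
    (a : A₀ ⟶ A₁) (b : B₀ ⟶ B₁) (c : C₀ ⟶ C₁) : Prop :=
  ∃ (Ca Cb Cc : D)
    (αa : A₁ ⟶ Ca) (βa : Ca ⟶ A₀⟦(1:ℤ)⟧)
    (αb : B₁ ⟶ Cb) (βb : Cb ⟶ B₀⟦(1:ℤ)⟧)
    (αc : C₁ ⟶ Cc) (βc : Cc ⟶ C₀⟦(1:ℤ)⟧)
    (fa : Ca ⟶ Cb) (fb : Cb ⟶ Cc) (δ : Cc ⟶ Ca⟦(1:ℤ)⟧),
    Triangle.mk a αa βa ∈ (distTriang D) ∧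
    Triangle.mk b αb βb ∈ (distTriang D) ∧
    Triangle.mk c αc βc ∈ (distTriang D) ∧
    Triangle.mk fa fb δ ∈ (distTriang D) ∧
    φ₁ ≫ αb = αa ≫ fa ∧
    ψ₁ ≫ αc = αb ≫ fb ∧
    δ₁ ≫ αa⟦(1:ℤ)⟧' = αc ≫ δ ∧
    βa ≫ φ₀⟦(1:ℤ)⟧' = fa ≫ βb ∧
    βb ≫ ψ₀⟦(1:ℤ)⟧' = fb ≫ βc ∧
    δ ≫ βa⟦(1:ℤ)⟧' = -(βc ≫ δ₀⟦(1:ℤ)⟧')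

end Defs

/-- A t-structure on a triangulated category (Def. 2.1), together with choices of the
truncation functors `τ^{≤0}` (right adjoint to the inclusion of `D^{≤0}`) and
`τ^{≥1}` (left adjoint to the inclusion of `D^{≥1}`).  Here `ge` is `D^{≥0}` and
membership of `X` in `D^{≥1} = Σ⁻¹ D^{≥0}` is expressed as `X⟦1⟧ ∈ ge`. -/
structure TData (D : Type u) [Category.{v} D] [HasZeroObject D] [Preadditive D]
    [HasShift D ℤ] [∀ n : ℤ, (shiftFunctor D n).Additive] [Pretriangulated D] where
  le : Set D
  ge : Set D
  le_iso : ∀ ⦃X Y : D⦄, (X ≅ Y) → X ∈ le → Y ∈ le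
  ge_iso : ∀ ⦃X Y : D⦄, (X ≅ Y) → X ∈ ge → Y ∈ ge
  shift_le : ∀ ⦃X : D⦄, X ∈ le → X⟦(1:ℤ)⟧ ∈ le
  shift_ge : ∀ ⦃X : D⦄, X⟦(1:ℤ)⟧ ∈ ge → X ∈ ge
  hom_zero : ∀ ⦃X Y : D⦄ (f : X ⟶ Y), X ∈ le → Y⟦(1:ℤ)⟧ ∈ ge → f = 0
  tri : ∀ X : D, ∃ (A B : D) (i : A ⟶ X) (p : X ⟶ B) (δ : B ⟶ A⟦(1:ℤ)⟧),
    A ∈ le ∧ B⟦(1:ℤ)⟧ ∈ ge ∧ Triangle.mk i p δ ∈ (distTriang D)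
  tle : D ⥤ D
  σ : tle ⟶ 𝟭 D
  tle_mem : ∀ X : D, tle.obj X ∈ le
  tle_univ : ∀ ⦃A : D⦄, A ∈ le → ∀ X : D,
    Function.Bijective (fun g : A ⟶ tle.obj X => g ≫ σ.app X)
  tge : D ⥤ D
  ρ : 𝟭 D ⟶ tge
  tge_mem : ∀ X : D, (tge.obj X)⟦(1:ℤ)⟧ ∈ ge
  tge_univ : ∀ X : D, ∀ ⦃B : D⦄, B⟦(1:ℤ)⟧ ∈ ge →
    Function.Bijective (fun g : tge.obj X ⟶ B => ρ.app X ≫ g)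

section TDefs

variable {D : Type u} [Category.{v} D] [HasZeroObject D] [Preadditive D]
  [HasShift D ℤ] [∀ n : ℤ, (shiftFunctor D n).Additive] [Pretriangulated D]

/-- `E_t`: morphisms `φ` with `τ^{≥1} φ` invertible. -/
def Et (t : TData D) : MorphismProperty D := fun _ _ φ => IsIso (t.tge.map φ)

/-- `M_t`: morphisms `φ` with `τ^{≤0} φ` invertible. -/
def Mt (t : TData D) : MorphismProperty D := fun _ _ φ => IsIso (t.tle.map φ)

end TDefs

section Proofs

variable {D : Type u} [Category.{v} D] [HasZeroObject D] [Preadditive D]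
  [HasShift D ℤ] [∀ n : ℤ, (shiftFunctor D n).Additive] [Pretriangulated D]

namespace TFS

/-- Restricted Yoneda: a morphism inducing bijections on homs from objects
satisfying `P` (which holds for source and target) is an isomorphism. -/
lemma isIso_of_post {P : D → Prop} {X Y : D} (φ : X ⟶ Y) (hX : P X) (hY : P Y)
    (h : ∀ W, P W → Function.Bijective (fun g : W ⟶ X => g ≫ φ)) : IsIso φ := by
  obtain ⟨ψ, hψ⟩ := (h Y hY).2 (𝟙 Y)
  dsimp at hψ
  refine ⟨ψ, ?_, hψ⟩
  apply (h X hX).1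
  dsimp
  rw [assoc, hψ, comp_id, id_comp]

lemma isIso_of_pre {P : D → Prop} {X Y : D} (φ : X ⟶ Y) (hX : P X) (hY : P Y)
    (h : ∀ W, P W → Function.Bijective (fun g : Y ⟶ W => φ ≫ g)) : IsIso φ := by
  obtain ⟨ψ, hψ⟩ := (h X hX).2 (𝟙 X)
  dsimp at hψ
  refine ⟨ψ, hψ, ?_⟩
  apply (h Y hY).1
  dsimp
  rw [← assoc, hψ, comp_id, id_comp]

variable (t : TData D)

lemma isZero_tge_of_le {A : D} (hA : A ∈ t.le) : IsZero (t.tge.obj A) := by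
  rw [IsZero.iff_id_eq_zero]
  apply (t.tge_univ A (t.tge_mem A)).1
  dsimp
  rw [comp_id, comp_zero]
  exact t.hom_zero _ hA (t.tge_mem A)

lemma isZero_tle_of_ge1 {B : D} (hB : B⟦(1:ℤ)⟧ ∈ t.ge) : IsZero (t.tle.obj B) := by
  rw [IsZero.iff_id_eq_zero]
  apply (t.tle_univ (t.tle_mem B) B).1
  dsimp
  rw [id_comp, zero_comp]
  exact t.hom_zero _ (t.tle_mem B) hB

lemma isZero_tge_zero : IsZero (t.tge.obj (0 : D)) := by
  rw [IsZero.iff_id_eq_zero]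
  apply (t.tge_univ (0 : D) (t.tge_mem _)).1
  dsimp
  rw [comp_id, comp_zero]
  exact (isZero_zero D).eq_of_src _ _

lemma isZero_tle_zero : IsZero (t.tle.obj (0 : D)) := by
  rw [IsZero.iff_id_eq_zero]
  apply (t.tle_univ (t.tle_mem (0 : D)) (0 : D)).1
  dsimp
  rw [id_comp, zero_comp]
  exact (isZero_zero D).eq_of_tgt _ _

lemma et_of_isZero {X Y : D} (f : X ⟶ Y) (hX : IsZero (t.tge.obj X))
    (hY : IsZero (t.tge.obj Y)) : Et t f :=
  ⟨0, hX.eq_of_src _ _, hY.eq_of_src _ _⟩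

lemma mt_of_isZero {X Y : D} (f : X ⟶ Y) (hX : IsZero (t.tle.obj X))
    (hY : IsZero (t.tle.obj Y)) : Mt t f :=
  ⟨0, hX.eq_of_src _ _, hY.eq_of_src _ _⟩

end TFS

end Proofs
section Proofs2
set_option linter.unusedSectionVars false
set_option maxHeartbeats 800000

variable {D : Type u} [Category.{v} D] [HasZeroObject D] [Preadditive D]
  [HasShift D ℤ] [∀ n : ℤ, (shiftFunctor D n).Additive] [Pretriangulated D]

namespace TFS

variable (t : TData D)

/-- The canonical truncation triangle `τ^{≤0}X ⟶ X ⟶ τ^{≥1}X ⟶ Σ τ^{≤0}X`. -/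
lemma canTri (X : D) : ∃ δ : t.tge.obj X ⟶ (t.tle.obj X)⟦(1:ℤ)⟧,
    Triangle.mk (t.σ.app X) (t.ρ.app X) δ ∈ distTriang D := by
  obtain ⟨A, B, i, p, d, hA, hB, hT⟩ := t.tri X
  obtain ⟨ii, hii⟩ := (t.tle_univ hA X).2 i
  dsimp at hii
  obtain ⟨pp, hpp⟩ := (t.tge_univ X hB).2 p
  dsimp at hpp
  have hiso : IsIso ii := by
    apply isIso_of_post (P := (· ∈ t.le)) ii hA (t.tle_mem X)
    intro W hW
    constructor
    · intro g g' hg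
      dsimp at hg
      have h0 : (g - g') ≫ i = 0 := by
        rw [Preadditive.sub_comp, ← hii, ← assoc, ← assoc, hg, sub_self]
      have h1 : (g - g')⟦(1:ℤ)⟧' ≫
          (Triangle.mk i p d).rotate.rotate.mor₂ = 0 := by
        dsimp [Triangle.mk, Triangle.rotate]
        rw [Preadditive.comp_neg, ← Functor.map_comp, h0, Functor.map_zero, neg_zero]
        rfl
      obtain ⟨z, hz⟩ := Triangle.coyoneda_exact₂ _
        (rot_of_distTriang _ (rot_of_distTriang _ hT)) _ h1
      dsimp [Triangle.mk, Triangle.rotate] at z hz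
      rw [t.hom_zero z (t.shift_le hW) hB, zero_comp] at hz
      have := (shiftFunctor D (1:ℤ)).map_injective
        (by rw [hz, Functor.map_zero] : (g - g')⟦(1:ℤ)⟧' = (0 : W ⟶ A)⟦(1:ℤ)⟧')
      rw [← sub_eq_zero]
      exact this
    · intro f
      have h0 : (f ≫ t.σ.app X) ≫ p = 0 := t.hom_zero _ hW hB
      obtain ⟨g, hg⟩ := Triangle.coyoneda_exact₂ _ hT _ h0
      dsimp [Triangle.mk] at g hg
      refine ⟨g, ?_⟩
      dsimp
      apply (t.tle_univ hW X).1
      dsimp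
      rw [assoc, hii, ← hg]
  have hpiso : IsIso pp := by
    apply isIso_of_pre (P := fun B => B⟦(1:ℤ)⟧ ∈ t.ge) pp (t.tge_mem X) hB
    intro W hW
    constructor
    · intro g g' hg
      dsimp at hg
      have h0 : p ≫ (g - g') = 0 := by
        rw [Preadditive.comp_sub, ← hpp, assoc, assoc, hg, sub_self]
      obtain ⟨z, hz⟩ := Triangle.yoneda_exact₂ _ (rot_of_distTriang _ hT) _ h0
      dsimp [Triangle.mk, Triangle.rotate] at z hz
      rw [t.hom_zero z (t.shift_le hA) hW, comp_zero] at hz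
      rw [← sub_eq_zero]
      exact hz
    · intro f
      have h0 : i ≫ (t.ρ.app X ≫ f) = 0 := by
        rw [← assoc, t.hom_zero (i ≫ t.ρ.app X) hA (t.tge_mem X), zero_comp]
      obtain ⟨g, hg⟩ := Triangle.yoneda_exact₂ _ hT _ h0
      dsimp [Triangle.mk] at g hg
      refine ⟨g, ?_⟩
      dsimp
      apply (t.tge_univ X hW).1
      dsimp
      rw [← assoc, hpp, ← hg]
  refine ⟨pp ≫ d ≫ ii⟦(1:ℤ)⟧', isomorphic_distinguished _ hT _ ?_⟩
  refine Triangle.isoMk _ _ (asIso ii).symm (Iso.refl X) (@asIso _ _ _ _ pp hpiso) ?_ ?_ ?_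
  · dsimp [Triangle.mk]
    rw [comp_id, ← hii, IsIso.inv_hom_id_assoc]
  · dsimp [Triangle.mk]
    rw [id_comp, hpp]
  · dsimp [Triangle.mk]
    rw [assoc, assoc, ← Functor.map_comp, IsIso.hom_inv_id, CategoryTheory.Functor.map_id, comp_id]
end TFS

end Proofs2
section Proofs3
set_option linter.unusedSectionVars false
set_option maxHeartbeats 800000

variable {D : Type u} [Category.{v} D] [HasZeroObject D] [Preadditive D]
  [HasShift D ℤ] [∀ n : ℤ, (shiftFunctor D n).Additive] [Pretriangulated D]

namespace TFS

variable (t : TData D)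

/-- Hom-characterization of `E_t`. -/
lemma et_iff {X Y : D} (e : X ⟶ Y) : Et t e ↔
    ∀ B : D, B⟦(1:ℤ)⟧ ∈ t.ge → Function.Bijective (fun g : Y ⟶ B => e ≫ g) := by
  have nat : ∀ (g : t.tge.obj Y ⟶ t.tge.obj Y), True := fun _ => trivial
  have hρ : t.ρ.app X ≫ t.tge.map e = e ≫ t.ρ.app Y := (t.ρ.naturality e).symm
  constructor
  · intro he B hB
    haveI : IsIso (t.tge.map e) := he
    constructor
    · intro g g' hg
      dsimp at hg
      obtain ⟨gg, hgg⟩ := (t.tge_univ Y hB).2 g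
      obtain ⟨gg', hgg'⟩ := (t.tge_univ Y hB).2 g'
      dsimp at hgg hgg'
      have : t.ρ.app X ≫ (t.tge.map e ≫ gg) = t.ρ.app X ≫ (t.tge.map e ≫ gg') := by
        rw [← assoc, ← assoc, hρ, assoc, assoc, hgg, hgg', hg]
      have h2 := (t.tge_univ X hB).1 this
      have h3 : gg = gg' := by
        rwa [cancel_epi (t.tge.map e)] at h2
      rw [← hgg, ← hgg', h3]
    · intro f
      obtain ⟨ff, hff⟩ := (t.tge_univ X hB).2 f
      dsimp at hff
      refine ⟨t.ρ.app Y ≫ inv (t.tge.map e) ≫ ff, ?_⟩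
      dsimp
      rw [← assoc, ← hρ, assoc, IsIso.hom_inv_id_assoc, hff]
  · intro h
    apply isIso_of_pre (P := fun B => B⟦(1:ℤ)⟧ ∈ t.ge) _ (t.tge_mem X) (t.tge_mem Y)
    intro W hW
    constructor
    · intro g g' hg
      dsimp at hg
      apply (t.tge_univ Y hW).1
      dsimp
      apply (h W hW).1
      dsimp
      rw [← assoc, ← hρ, ← assoc, ← hρ, assoc, assoc, hg]
    · intro f
      obtain ⟨f', hf'⟩ := (h W hW).2 (t.ρ.app X ≫ f)
      dsimp at hf'
      obtain ⟨ff, hff⟩ := (t.tge_univ Y hW).2 f'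
      dsimp at hff
      refine ⟨ff, ?_⟩
      dsimp
      apply (t.tge_univ X hW).1
      dsimp
      rw [← assoc, hρ, assoc, hff, hf']

/-- Hom-characterization of `M_t`. -/
lemma mt_iff {X Y : D} (m : X ⟶ Y) : Mt t m ↔
    ∀ A : D, A ∈ t.le → Function.Bijective (fun g : A ⟶ X => g ≫ m) := by
  have hσ : t.tle.map m ≫ t.σ.app Y = t.σ.app X ≫ m := t.σ.naturality m
  constructor
  · intro hm A hA
    haveI : IsIso (t.tle.map m) := hm
    constructor
    · intro g g' hg
      dsimp at hg
      obtain ⟨gg, hgg⟩ := (t.tle_univ hA X).2 g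
      obtain ⟨gg', hgg'⟩ := (t.tle_univ hA X).2 g'
      dsimp at hgg hgg'
      have : (gg ≫ t.tle.map m) ≫ t.σ.app Y = (gg' ≫ t.tle.map m) ≫ t.σ.app Y := by
        rw [assoc, assoc, hσ, ← assoc, ← assoc, hgg, hgg', hg]
      have h2 := (t.tle_univ hA Y).1 this
      have h3 : gg = gg' := by rwa [cancel_mono (t.tle.map m)] at h2
      rw [← hgg, ← hgg', h3]
    · intro f
      obtain ⟨ff, hff⟩ := (t.tle_univ hA Y).2 f
      dsimp at hff
      refine ⟨(ff ≫ inv (t.tle.map m)) ≫ t.σ.app X, ?_⟩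
      dsimp
      rw [assoc, ← hσ, assoc, IsIso.inv_hom_id_assoc, hff]
  · intro h
    apply isIso_of_post (P := (· ∈ t.le)) _ (t.tle_mem X) (t.tle_mem Y)
    intro W hW
    constructor
    · intro g g' hg
      dsimp at hg
      apply (t.tle_univ hW X).1
      dsimp
      apply (h W hW).1
      dsimp
      rw [assoc, assoc, ← hσ, ← assoc, ← assoc, hg]
    · intro f
      obtain ⟨f', hf'⟩ := (h W hW).2 (f ≫ t.σ.app Y)
      dsimp at hf'
      obtain ⟨ff, hff⟩ := (t.tle_univ hW X).2 f'
      dsimp at hff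
      refine ⟨ff, ?_⟩
      dsimp
      apply (t.tle_univ hW Y).1
      dsimp
      rw [assoc, hσ, ← assoc, hff, hf']

end TFS

end Proofs3
section Proofs4
set_option linter.unusedSectionVars false
set_option maxHeartbeats 800000

variable {D : Type u} [Category.{v} D] [HasZeroObject D] [Preadditive D]
  [HasShift D ℤ] [∀ n : ℤ, (shiftFunctor D n).Additive] [Pretriangulated D]

namespace TFS

variable (t : TData D)

lemma ge1_shift_neg {B : D} (hB : B⟦(1:ℤ)⟧ ∈ t.ge) : (B⟦(-1:ℤ)⟧)⟦(1:ℤ)⟧ ∈ t.ge := by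
  have hBge : B ∈ t.ge := t.shift_ge hB
  exact t.ge_iso ((shiftFunctorCompIsoId D (-1:ℤ) (1:ℤ) (by omega)).app B).symm hBge

/-- `E_t` is closed under shift. -/
lemma et_shift {X Y : D} (e : X ⟶ Y) (he : Et t e) : Et t (e⟦(1:ℤ)⟧') := by
  rw [et_iff] at he ⊢
  intro B hB
  set ν := (shiftFunctorCompIsoId D (1:ℤ) (-1:ℤ) (by omega)).inv with hν
  have hbij : ∀ W : D, Function.Bijective
      (fun g : W⟦(1:ℤ)⟧ ⟶ B => ν.app W ≫ g⟦(-1:ℤ)⟧') := by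
    intro W
    constructor
    · intro g g' hg
      dsimp at hg
      rw [cancel_epi (ν.app W)] at hg
      exact (shiftFunctor D (-1:ℤ)).map_injective hg
    · intro h
      obtain ⟨g, hg⟩ := (shiftFunctor D (-1:ℤ)).map_surjective
        ((shiftFunctorCompIsoId D (1:ℤ) (-1:ℤ) (by omega)).hom.app W ≫ h)
      refine ⟨g, ?_⟩
      dsimp
      rw [hg, ← assoc]
      change (ν.app W ≫ _) ≫ h = h
      rw [hν, Iso.inv_hom_id_app, id_comp]
  have hnat : ∀ (g : Y⟦(1:ℤ)⟧ ⟶ B),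
      ν.app X ≫ (e⟦(1:ℤ)⟧' ≫ g)⟦(-1:ℤ)⟧' = e ≫ ν.app Y ≫ g⟦(-1:ℤ)⟧' := by
    intro g
    rw [Functor.map_comp, ← assoc, ← assoc]
    congr 1
    exact (ν.naturality e).symm
  have hB' : (B⟦(-1:ℤ)⟧)⟦(1:ℤ)⟧ ∈ t.ge := ge1_shift_neg t hB
  have he' := he (B⟦(-1:ℤ)⟧) hB'
  constructor
  · intro g g' hg
    dsimp at hg
    apply (hbij Y).1
    dsimp
    apply he'.1
    dsimp
    rw [← hnat, ← hnat, hg]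
  · intro f
    obtain ⟨w, hw⟩ := he'.2 (ν.app X ≫ f⟦(-1:ℤ)⟧')
    dsimp at hw
    obtain ⟨g, hg⟩ := (hbij Y).2 w
    dsimp at hg
    refine ⟨g, ?_⟩
    apply (hbij X).1
    dsimp
    rw [hnat, hg, hw]

/-- An object with no nonzero maps to `D^{≥1}` lies in `D^{≤0}`. -/
lemma le_of_orth {X : D} (hX : ∀ B : D, B⟦(1:ℤ)⟧ ∈ t.ge → ∀ f : X ⟶ B, f = 0) :
    X ∈ t.le := by
  obtain ⟨δ, hT⟩ := canTri t X
  have hzero : IsZero (t.tge.obj X) := by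
    rw [IsZero.iff_id_eq_zero]
    apply (t.tge_univ X (t.tge_mem X)).1
    dsimp
    rw [comp_id, comp_zero]
    exact hX _ (t.tge_mem X) _
  haveI : IsIso (t.σ.app X) := (Triangle.isZero₃_iff_isIso₁ _ hT).1 hzero
  exact t.le_iso (asIso (t.σ.app X)) (t.tle_mem X)

/-- If `e ∈ E_t` then every map from its cone to `D^{≥1}` vanishes. -/
lemma et_cone_orth {E₀ E₁ Ce : D} {e : E₀ ⟶ E₁} {αe : E₁ ⟶ Ce} {βe : Ce ⟶ E₀⟦(1:ℤ)⟧}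
    (hT : Triangle.mk e αe βe ∈ distTriang D) (he : Et t e)
    {B : D} (hB : B⟦(1:ℤ)⟧ ∈ t.ge) (h : Ce ⟶ B) : h = 0 := by
  have he' := (et_iff t e).1 he B hB
  have z12 : e ≫ αe = 0 := comp_distTriang_mor_zero₁₂ _ hT
  have z31 : βe ≫ e⟦(1:ℤ)⟧' = 0 := comp_distTriang_mor_zero₃₁ _ hT
  have h1 : e ≫ (αe ≫ h) = 0 := by
    rw [← assoc, z12, zero_comp]
  have h2 : αe ≫ h = 0 := by
    apply he'.1
    dsimp
    rw [h1, comp_zero]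
  obtain ⟨k, hk⟩ := Triangle.yoneda_exact₃ _ hT h h2
  dsimp [Triangle.mk, Triangle.rotate] at k hk
  -- k : E₀⟦1⟧ ⟶ B ; extend along e⟦1⟧
  have he1 := (et_iff t _).1 (et_shift t e he) B hB
  obtain ⟨kk, hkk⟩ := he1.2 k
  dsimp at hkk
  rw [hk, ← hkk, ← assoc, z31, zero_comp]

/-- If `m ∈ M_t` then every map from `Σ D^{≤0}` to its cone vanishes. -/
lemma mt_cone_orth {M₀ M₁ Cm : D} {m : M₀ ⟶ M₁} {αm : M₁ ⟶ Cm} {βm : Cm ⟶ M₀⟦(1:ℤ)⟧}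
    (hT : Triangle.mk m αm βm ∈ distTriang D) (hm : Mt t m)
    {A : D} (hA : A ∈ t.le) (h : A⟦(1:ℤ)⟧ ⟶ Cm) : h = 0 := by
  have hm' := (mt_iff t m).1 hm
  have z12 : m ≫ αm = 0 := comp_distTriang_mor_zero₁₂ _ hT
  have z31 : βm ≫ m⟦(1:ℤ)⟧' = 0 := comp_distTriang_mor_zero₃₁ _ hT
  obtain ⟨v, hv⟩ := (shiftFunctor D (1:ℤ)).map_surjective (h ≫ βm)
  have hv0 : v ≫ m = 0 := by
    apply (shiftFunctor D (1:ℤ)).map_injective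
    rw [Functor.map_comp, hv, assoc, Functor.map_zero, z31, comp_zero]
  have hv1 : v = 0 := by
    apply (hm' A hA).1
    dsimp
    rw [hv0, zero_comp]
  have hβ : h ≫ βm = 0 := by rw [← hv, hv1, Functor.map_zero]
  obtain ⟨h₁, hh₁⟩ := Triangle.coyoneda_exact₃ _ hT h hβ
  dsimp [Triangle.mk, Triangle.rotate] at h₁ hh₁
  obtain ⟨h₂, hh₂⟩ := (hm' _ (t.shift_le hA)).2 h₁
  dsimp at hh₂
  rw [hh₁, ← hh₂, assoc, z12, comp_zero]

end TFS

end Proofs4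
section Proofs5
set_option linter.unusedSectionVars false
set_option maxHeartbeats 1600000

variable {D : Type u} [Category.{v} D] [HasZeroObject D] [Preadditive D]
  [HasShift D ℤ] [∀ n : ℤ, (shiftFunctor D n).Additive] [Pretriangulated D]

namespace TFS

variable (t : TData D)

/-- Morphisms of `E_t` are homotopy-orthogonal to morphisms of `M_t`. -/
lemma hOrth_of_et_mt {E₀ E₁ M₀ M₁ : D} {e : E₀ ⟶ E₁} {m : M₀ ⟶ M₁}
    (he : Et t e) (hm : Mt t m) : HOrth e m := by
  intro Ce αe βe hTe Cm αm βm hTm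
  have hCe : Ce ∈ t.le := le_of_orth t (fun B hB f => et_cone_orth t hTe he hB f)
  constructor
  · -- (HO1)
    intro φ
    have h0 : φ⟦(1:ℤ)⟧' ≫ (shiftFunctorCompIsoId D (-1:ℤ) (1:ℤ) (by omega)).hom.app Cm = 0 :=
      mt_cone_orth t hTm hm hCe _
    rw [CategoryTheory.Preadditive.IsIso.comp_right_eq_zero] at h0
    have hφ : φ = 0 := (shiftFunctor D (1:ℤ)).map_injective (by rw [h0, Functor.map_zero])
    rw [hφ, zero_comp, comp_zero]
  · -- (HO2)
    have key : ∀ ψ : Ce ⟶ Cm, αe ≫ ψ ≫ βm = 0 → ψ = 0 := by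
      intro ψ hψ
      have z31e : βe ≫ e⟦(1:ℤ)⟧' = 0 := comp_distTriang_mor_zero₃₁ _ hTe
      have z12m : m ≫ αm = 0 := comp_distTriang_mor_zero₁₂ _ hTm
      have z31m : βm ≫ m⟦(1:ℤ)⟧' = 0 := comp_distTriang_mor_zero₃₁ _ hTm
      obtain ⟨u, hu⟩ := Triangle.yoneda_exact₂ _ (rot_of_distTriang _ hTe) (ψ ≫ βm) hψ
      dsimp [Triangle.mk, Triangle.rotate] at u hu
      obtain ⟨u₀, hu₀⟩ := (shiftFunctor D (1:ℤ)).map_surjective u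
      obtain ⟨w, hw⟩ := ((et_iff t e).1 he _ (t.tge_mem M₀)).2 (u₀ ≫ t.ρ.app M₀)
      dsimp at hw
      have h3 : (ψ ≫ βm) ≫ (t.ρ.app M₀)⟦(1:ℤ)⟧' = 0 := by
        rw [hu, ← hu₀, assoc, ← Functor.map_comp, ← hw, Functor.map_comp, ← assoc,
          z31e, zero_comp]
      obtain ⟨δ₀, hc₀⟩ := canTri t M₀
      obtain ⟨δ₁, hc₁⟩ := canTri t M₁
      have hc₀3 := rot_of_distTriang _ (rot_of_distTriang _ (rot_of_distTriang _ hc₀))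
      obtain ⟨y', hy'⟩ := Triangle.coyoneda_exact₂ _ hc₀3 (ψ ≫ βm)
        (by dsimp [Triangle.mk, Triangle.rotate]; rw [Preadditive.comp_neg, h3, neg_zero]; rfl)
      dsimp [Triangle.mk, Triangle.rotate] at y' hy'
      have hy : ψ ≫ βm = (-y') ≫ (t.σ.app M₀)⟦(1:ℤ)⟧' := by
        rw [hy', Preadditive.comp_neg, Preadditive.neg_comp]
      have h5 : (ψ ≫ βm) ≫ m⟦(1:ℤ)⟧' = 0 := by rw [assoc, z31m, comp_zero]
      have hσm : t.σ.app M₀ ≫ m = t.tle.map m ≫ t.σ.app M₁ := (t.σ.naturality m).symm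
      have h6 : ((-y') ≫ (t.tle.map m)⟦(1:ℤ)⟧') ≫ (-(t.σ.app M₁)⟦(1:ℤ)⟧') = 0 := by
        rw [Preadditive.comp_neg, neg_eq_zero, assoc, ← Functor.map_comp, ← hσm,
          Functor.map_comp, ← assoc, ← hy, h5]
      have hc₁2 := rot_of_distTriang _ (rot_of_distTriang _ hc₁)
      obtain ⟨z, hz⟩ := Triangle.coyoneda_exact₂ _ hc₁2 ((-y') ≫ (t.tle.map m)⟦(1:ℤ)⟧') h6
      dsimp [Triangle.mk, Triangle.rotate] at z hz
      have hz0 : z = 0 := et_cone_orth t hTe he (t.tge_mem M₁) z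
      rw [hz0, zero_comp] at hz
      haveI : IsIso (t.tle.map m) := hm
      have hy0 : (-y' : Ce ⟶ (t.tle.obj M₀)⟦(1:ℤ)⟧) = 0 := by
        rwa [CategoryTheory.Preadditive.IsIso.comp_right_eq_zero] at hz
      have hx0 : ψ ≫ βm = 0 := by rw [hy, hy0, zero_comp]
      obtain ⟨ξ, hξ⟩ := Triangle.coyoneda_exact₃ _ hTm ψ hx0
      dsimp [Triangle.mk, Triangle.rotate] at ξ hξ
      obtain ⟨ξ₀, hξ₀⟩ := ((mt_iff t m).1 hm Ce hCe).2 ξ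
      dsimp at hξ₀
      rw [hξ, ← hξ₀, assoc, z12m, comp_zero]
    intro φ φ' h
    dsimp at h
    have h2 : αe ≫ (φ - φ') ≫ βm = 0 := by
      rw [Preadditive.sub_comp, Preadditive.comp_sub, h, sub_self]
    have h3 := key _ h2
    rwa [sub_eq_zero] at h3

end TFS

end Proofs5
section Proofs6
set_option linter.unusedSectionVars false
set_option maxHeartbeats 1600000

variable {D : Type u} [Category.{v} D] [HasZeroObject D] [Preadditive D]
  [HasShift D ℤ] [∀ n : ℤ, (shiftFunctor D n).Additive] [Pretriangulated D]

namespace TFS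

variable (t : TData D)

/-- A morphism with a cone satisfying the two conditions lies in `M_t`. -/
lemma mt_of_cone {M₀ M₁ Cm : D} {m : M₀ ⟶ M₁} {αm : M₁ ⟶ Cm} {βm : Cm ⟶ M₀⟦(1:ℤ)⟧}
    (hTm : Triangle.mk m αm βm ∈ distTriang D)
    (h1 : ∀ A : D, A ∈ t.le → ∀ h : A⟦(1:ℤ)⟧ ⟶ Cm, h = 0)
    (h2 : ∀ A : D, A ∈ t.le → ∀ g : A ⟶ M₁, g ≫ αm = 0) : Mt t m := by
  rw [mt_iff]
  intro A hA
  constructor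
  · intro g g' hg
    dsimp at hg
    have h0 : (g - g') ≫ m = 0 := by rw [Preadditive.sub_comp, hg, sub_self]
    have hT2 := rot_of_distTriang _ (rot_of_distTriang _ hTm)
    have hf : (g - g')⟦(1:ℤ)⟧' ≫ (Triangle.mk m αm βm).rotate.rotate.mor₂ = 0 := by
      dsimp [Triangle.mk, Triangle.rotate]
      rw [Preadditive.comp_neg, ← Functor.map_comp, h0, Functor.map_zero, neg_zero]
      rfl
    obtain ⟨h, hh⟩ := Triangle.coyoneda_exact₂ _ hT2 _ hf
    dsimp [Triangle.mk, Triangle.rotate] at h hh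
    rw [h1 A hA h, zero_comp] at hh
    rw [← sub_eq_zero]
    exact (shiftFunctor D (1:ℤ)).map_injective (by rw [hh, Functor.map_zero])
  · intro g
    obtain ⟨g₀, hg₀⟩ := Triangle.coyoneda_exact₂ _ hTm g (h2 A hA g)
    exact ⟨g₀, hg₀.symm⟩

lemma rightOrth_eq : rightOrth (Et t) = Mt t := by
  apply MorphismProperty.ext
  intro M₀ M₁ m
  constructor
  · intro hm
    obtain ⟨Cm, αm, βm, hTm⟩ := distinguished_cocone_triangle m
    have z23m : αm ≫ βm = 0 := comp_distTriang_mor_zero₂₃ _ hTm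
    have h1 : ∀ A : D, A ∈ t.le → ∀ h : A⟦(1:ℤ)⟧ ⟶ Cm, h = 0 := by
      intro A hA h
      have he : Et t (0 : A ⟶ 0) :=
        et_of_isZero t _ (isZero_tge_of_le t hA) (isZero_tge_zero t)
      have hh := (hm _ he _ _ _ (contractible_distinguished₂ A) _ _ _ hTm).2
      have heq : ((0 : (0:D) ⟶ A⟦(1:ℤ)⟧) ≫ h ≫ βm)
          = ((0 : (0:D) ⟶ A⟦(1:ℤ)⟧) ≫ (0 : A⟦(1:ℤ)⟧ ⟶ Cm) ≫ βm) := by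
        rw [zero_comp, zero_comp]
      exact hh heq
    have hii : ∀ A : D, A ∈ t.le → ∀ g : A ⟶ Cm, g ≫ βm = 0 → g = 0 := by
      intro A hA g hg
      have he : Et t (0 : (0:D) ⟶ A) :=
        et_of_isZero t _ (isZero_tge_zero t) (isZero_tge_of_le t hA)
      have hh := (hm _ he _ _ _ (contractible_distinguished₁ A) _ _ _ hTm).2
      have heq : (𝟙 A ≫ g ≫ βm) = (𝟙 A ≫ (0 : A ⟶ Cm) ≫ βm) := by
        simp [hg]
      exact hh heq
    refine mt_of_cone t hTm h1 ?_
    intro A hA g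
    apply hii A hA
    rw [assoc, z23m, comp_zero]
  · intro hm X Y e he
    exact hOrth_of_et_mt t he hm

lemma leftOrth_eq : leftOrth (Mt t) = Et t := by
  apply MorphismProperty.ext
  intro E₀ E₁ e
  constructor
  · intro he
    obtain ⟨Ce, αe, βe, hTe⟩ := distinguished_cocone_triangle e
    have z23e : αe ≫ βe = 0 := comp_distTriang_mor_zero₂₃ _ hTe
    have ha : ∀ B : D, B⟦(1:ℤ)⟧ ∈ t.ge → ∀ h : Ce ⟶ B, h = 0 := by
      intro B hB h
      have hmB : Mt t (0 : (0:D) ⟶ B) :=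
        mt_of_isZero t _ (isZero_tle_zero t) (isZero_tle_of_ge1 t hB)
      have hh := (he _ hmB _ _ _ hTe _ _ _ (contractible_distinguished₁ B)).2
      have heq : (αe ≫ h ≫ (0 : B ⟶ (0:D)⟦(1:ℤ)⟧))
          = (αe ≫ (0 : Ce ⟶ B) ≫ (0 : B ⟶ (0:D)⟦(1:ℤ)⟧)) := by
        simp
      exact hh heq
    have hb : ∀ B : D, B⟦(1:ℤ)⟧ ∈ t.ge → ∀ φ : Ce ⟶ B⟦(1:ℤ)⟧, αe ≫ φ = 0 → φ = 0 := by
      intro B hB φ hφ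
      have hmB : Mt t (0 : B ⟶ (0:D)) :=
        mt_of_isZero t _ (isZero_tle_of_ge1 t hB) (isZero_tle_zero t)
      have hh := (he _ hmB _ _ _ hTe _ _ _ (contractible_distinguished₂ B)).2
      have heq : (αe ≫ φ ≫ 𝟙 (B⟦(1:ℤ)⟧)) = (αe ≫ (0 : Ce ⟶ B⟦(1:ℤ)⟧) ≫ 𝟙 (B⟦(1:ℤ)⟧)) := by
        rw [comp_id, hφ, zero_comp, comp_zero]
      exact hh heq
    rw [et_iff]
    intro B hB
    constructor
    · intro g g' hg
      dsimp at hg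
      have h0 : e ≫ (g - g') = 0 := by rw [Preadditive.comp_sub, hg, sub_self]
      obtain ⟨h, hh⟩ := Triangle.yoneda_exact₂ _ hTe _ h0
      dsimp [Triangle.mk, Triangle.rotate] at h hh
      rw [ha B hB h, comp_zero] at hh
      rw [← sub_eq_zero]
      exact hh
    · intro f
      have hβf : βe ≫ f⟦(1:ℤ)⟧' = 0 := by
        apply hb B hB
        rw [← assoc, z23e, zero_comp]
      have hT2 := rot_of_distTriang _ (rot_of_distTriang _ hTe)
      obtain ⟨g', hg'⟩ := Triangle.yoneda_exact₂ _ hT2 (f⟦(1:ℤ)⟧') hβf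
      dsimp [Triangle.mk, Triangle.rotate] at g' hg'
      obtain ⟨g₀, hg₀⟩ := (shiftFunctor D (1:ℤ)).map_surjective (-g')
      refine ⟨g₀, ?_⟩
      dsimp
      apply (shiftFunctor D (1:ℤ)).map_injective
      rw [Functor.map_comp, hg₀, hg', Preadditive.neg_comp, Preadditive.comp_neg]
  · intro he X Y m hm
    exact hOrth_of_et_mt t he hm

end TFS

end Proofs6
section Proofs7
set_option linter.unusedSectionVars false
set_option maxHeartbeats 1600000

variable {D : Type u} [Category.{v} D] [HasZeroObject D] [Preadditive D]
  [HasShift D ℤ] [∀ n : ℤ, (shiftFunctor D n).Additive] [Pretriangulated D]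

namespace TFS

variable (t : TData D)

lemma rho_cancel {Y B : D} (hB : B⟦(1:ℤ)⟧ ∈ t.ge) (θ : t.tge.obj Y ⟶ B⟦(1:ℤ)⟧)
    (hθ : t.ρ.app Y ≫ θ = 0) : θ = 0 := by
  obtain ⟨δY, hcY⟩ := canTri t Y
  obtain ⟨ζ, hζ⟩ := Triangle.yoneda_exact₂ _ (rot_of_distTriang _ hcY) θ hθ
  dsimp [Triangle.mk, Triangle.rotate] at ζ hζ
  obtain ⟨ζ₀, hζ₀⟩ := (shiftFunctor D (1:ℤ)).map_surjective ζ
  rw [hζ, ← hζ₀, t.hom_zero ζ₀ (t.tle_mem Y) hB, Functor.map_zero, comp_zero]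

lemma factorization {X Y : D} (f : X ⟶ Y) :
    ∃ (P : D) (e : X ⟶ P) (m : P ⟶ Y), Et t e ∧ Mt t m ∧ e ≫ m = f := by
  obtain ⟨G, qq, r, hTG⟩ := distinguished_cocone_triangle (t.tge.map f)
  have hρf : f ≫ t.ρ.app Y = t.ρ.app X ≫ t.tge.map f := t.ρ.naturality f
  obtain ⟨P, m, δ, hT⟩ := distinguished_cocone_triangle₁ ((t.ρ.app Y ≫ qq : Y ⟶ G))
  have zG12 : t.tge.map f ≫ qq = 0 := comp_distTriang_mor_zero₁₂ _ hTG
  have z12 : m ≫ (t.ρ.app Y ≫ qq) = 0 := comp_distTriang_mor_zero₁₂ _ hT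
  have z23 : (t.ρ.app Y ≫ qq) ≫ δ = 0 := comp_distTriang_mor_zero₂₃ _ hT
  have z31 : δ ≫ m⟦(1:ℤ)⟧' = 0 := comp_distTriang_mor_zero₃₁ _ hT
  -- m lies in M_t
  have hmMt : Mt t m := by
    apply mt_of_cone t hT
    · intro A hA h
      obtain ⟨v, hv⟩ := (shiftFunctor D (1:ℤ)).map_surjective (h ≫ r)
      have hr : h ≫ r = 0 := by
        rw [← hv, t.hom_zero v hA (t.tge_mem X), Functor.map_zero]
      obtain ⟨h', hh'⟩ := Triangle.coyoneda_exact₃ _ hTG h hr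
      dsimp [Triangle.mk, Triangle.rotate] at h' hh'
      rw [hh', t.hom_zero h' (t.shift_le hA) (t.tge_mem Y), zero_comp]
    · intro A hA g
      rw [← assoc, t.hom_zero (g ≫ t.ρ.app Y) hA (t.tge_mem Y), zero_comp]
  -- comparison morphism between the cones
  obtain ⟨c, hc1, hc2⟩ := complete_distinguished_triangle_morphism _ _
    (rot_of_distTriang _ hT) (rot_of_distTriang _ hTG) (t.ρ.app Y) (𝟙 G)
    (by dsimp [Triangle.mk, Triangle.rotate]; rw [comp_id])
  dsimp [Triangle.mk, Triangle.rotate] at c hc1 hc2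
  rw [id_comp] at hc1
  rw [Preadditive.neg_comp, Preadditive.comp_neg, neg_inj] at hc2
  obtain ⟨c', hc1', hc2'⟩ : ∃ c' : P⟦(1:ℤ)⟧ ⟶ (t.tge.obj X)⟦(1:ℤ)⟧, δ ≫ c' = r ∧
      m⟦(1:ℤ)⟧' ≫ (t.ρ.app Y)⟦(1:ℤ)⟧' = c' ≫ (t.tge.map f)⟦(1:ℤ)⟧' := ⟨c, hc1, hc2⟩
  obtain ⟨tt, htt⟩ := (shiftFunctor D (1:ℤ)).map_surjective c'
  have hδc : δ ≫ (shiftFunctor D (1:ℤ)).map tt = r := by rw [htt]; exact hc1'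
  have htf : tt ≫ t.tge.map f = m ≫ t.ρ.app Y := by
    apply (shiftFunctor D (1:ℤ)).map_injective
    rw [Functor.map_comp, Functor.map_comp, htt, ← hc2']
  -- lift of f through m
  have hfq : f ≫ (t.ρ.app Y ≫ qq) = 0 := by
    rw [← assoc, hρf, assoc, zG12, comp_zero]
  obtain ⟨e₀', he₀'⟩ := Triangle.coyoneda_exact₂ _ hT f hfq
  obtain ⟨e₀, he₀⟩ : ∃ e₀ : X ⟶ P, f = e₀ ≫ m := ⟨e₀', he₀'⟩
  -- correction term
  obtain ⟨ρX, hρX⟩ : ∃ ρX : X ⟶ t.tge.obj X, ρX = t.ρ.app X := ⟨t.ρ.app X, rfl⟩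
  obtain ⟨dd, hdd⟩ : ∃ dd : X ⟶ t.tge.obj X, dd = e₀ ≫ tt - ρX := ⟨_, rfl⟩
  have hd : dd ≫ t.tge.map f = 0 := by
    rw [hdd, Preadditive.sub_comp, assoc, htf, ← assoc, ← he₀, hρX, hρf, sub_self]
  have hTG2 := rot_of_distTriang _ (rot_of_distTriang _ hTG)
  obtain ⟨d₁, hd₁⟩ := Triangle.coyoneda_exact₂ _ hTG2 (dd⟦(1:ℤ)⟧')
    (by dsimp [Triangle.mk, Triangle.rotate]; rw [Preadditive.comp_neg, ← Functor.map_comp, hd, Functor.map_zero, neg_zero]; rfl)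
  dsimp [Triangle.mk, Triangle.rotate] at d₁ hd₁
  obtain ⟨c₀, hc₀⟩ := (shiftFunctor D (1:ℤ)).map_surjective (d₁ ≫ δ)
  have het : (e₀ - c₀) ≫ tt = ρX := by
    apply (shiftFunctor D (1:ℤ)).map_injective
    rw [Functor.map_comp, Functor.map_sub, Preadditive.sub_comp, htt, hc₀, assoc, hc1',
      ← hd₁, hdd, Functor.map_sub, Functor.map_comp, htt, sub_sub_cancel]
  refine ⟨P, e₀ - c₀, m, ?_, hmMt, ?_⟩
  · -- e ∈ E_t
    rw [et_iff]
    intro B hB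
    have hsur : ∀ ψ : P ⟶ B, ∃ φ : t.tge.obj X ⟶ B, ψ = tt ≫ φ := by
      intro ψ
      have ha : qq ≫ δ ≫ ψ⟦(1:ℤ)⟧' = 0 := by
        apply rho_cancel t hB
        rw [← assoc, ← assoc, z23, zero_comp]
      obtain ⟨Φ₁, hΦ₁⟩ := Triangle.yoneda_exact₂ _ (rot_of_distTriang _ hTG)
        (δ ≫ ψ⟦(1:ℤ)⟧') ha
      dsimp [Triangle.mk, Triangle.rotate] at Φ₁ hΦ₁
      have hcc : δ ≫ (ψ⟦(1:ℤ)⟧' - (shiftFunctor D (1:ℤ)).map tt ≫ Φ₁) = 0 := by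
        rw [Preadditive.comp_sub, ← assoc, hδc, ← hΦ₁, sub_self]
      obtain ⟨Ξ, hΞ⟩ := Triangle.yoneda_exact₂ _ (rot_of_distTriang _ (rot_of_distTriang _ hT))
        (ψ⟦(1:ℤ)⟧' - (shiftFunctor D (1:ℤ)).map tt ≫ Φ₁) hcc
      dsimp [Triangle.mk, Triangle.rotate] at Ξ hΞ
      obtain ⟨Ξ₀, hΞ₀⟩ := (shiftFunctor D (1:ℤ)).map_surjective Ξ
      obtain ⟨η, hη⟩ := (t.tge_univ Y hB).2 Ξ₀
      dsimp at hη
      obtain ⟨Φ₀, hΦ₀⟩ : ∃ Φ₀ : t.tge.obj X ⟶ B, (shiftFunctor D (1:ℤ)).map Φ₀ = Φ₁ :=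
        (shiftFunctor D (1:ℤ)).map_surjective Φ₁
      refine ⟨Φ₀ - t.tge.map f ≫ η, ?_⟩
      apply (shiftFunctor D (1:ℤ)).map_injective
      have h1 : (shiftFunctor D (1:ℤ)).map tt ≫ (shiftFunctor D (1:ℤ)).map (t.tge.map f)
          = (shiftFunctor D (1:ℤ)).map m ≫ (shiftFunctor D (1:ℤ)).map (t.ρ.app Y) := by
        rw [← Functor.map_comp, ← Functor.map_comp, htf]
      have h2 : (shiftFunctor D (1:ℤ)).map (t.ρ.app Y) ≫ (shiftFunctor D (1:ℤ)).map η
          = Ξ := by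
        rw [← Functor.map_comp, hη, hΞ₀]
      rw [sub_eq_iff_eq_add] at hΞ
      rw [Functor.map_comp, Functor.map_sub, Functor.map_comp, hΦ₀, Preadditive.comp_sub,
        ← assoc, h1, assoc, h2, hΞ, Preadditive.neg_comp]
      abel
    constructor
    · intro g g' hg
      dsimp at hg
      obtain ⟨φ, hφ⟩ := hsur (g - g')
      have h0 : ρX ≫ φ = 0 := by
        rw [← het, assoc, ← hφ, Preadditive.comp_sub, hg, sub_self]
      have hφ0 : φ = 0 := by
        apply (t.tge_univ X hB).1
        dsimp
        rw [comp_zero, ← hρX, h0]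
      rw [← sub_eq_zero, hφ, hφ0, comp_zero]
    · intro g
      obtain ⟨φg, hφg⟩ := (t.tge_univ X hB).2 g
      dsimp at hφg
      refine ⟨tt ≫ φg, ?_⟩
      dsimp
      rw [← assoc, het, hρX, hφg]
  · -- e ≫ m = f
    apply (shiftFunctor D (1:ℤ)).map_injective
    rw [Functor.map_comp, Functor.map_sub, Preadditive.sub_comp, hc₀, assoc, z31,
      comp_zero, sub_zero, ← Functor.map_comp, ← he₀]

end TFS

end Proofs7

section Statements

variable {D : Type u} [Category.{v} D] [HasZeroObject D] [Preadditive D]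
  [HasShift D ℤ] [∀ n : ℤ, (shiftFunctor D n).Additive] [Pretriangulated D]

/-- Proposition 2.8: the pair `(E_t, M_t)` is a triangulated factorization system. -/
theorem Ft_is_triangulated_FS (t : TData D) : IsTriFS (Et t) (Mt t) := by
  refine ⟨⟨TFS.rightOrth_eq t, TFS.leftOrth_eq t, fun X Y f hf => TFS.et_shift t f hf⟩,
    fun X Y f => TFS.factorization t f⟩

end Statements
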